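/- Let M be a matrix in GL₅(ℂ) of finite order whose characteristic polynomial has coefficients in ℤ[ω] and is a product of cyclotomic polynomials, and which is congruent to (x+1)(x−1)⁴ modulo the ideal (1−ω) of ℤ[ω]. Then the order of M divides 18. -/

import Mathlib

open Polynomial

lemma key_div (ω : ℂ) (hω : IsPrimitiveRoot ω 3) (c : ℤ) (z : ℂ)
    (hz : z ∈ Algebra.adjoin ℤ ({ω} : Set ℂ)) (h : (c : ℂ) = (1 - ω) * z) :
    (3 : ℤ) ∣ c := by
  have hω3 : ω ^ 2 + ω + 1 = 0 := by
    have h1 : ω ^ 3 = 1 := hω.pow_eq_one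
    have h2 : ω ≠ 1 := hω.ne_one (by norm_num)
    have : (ω - 1) * (ω ^ 2 + ω + 1) = 0 := by linear_combination h1
    rcases mul_eq_zero.1 this with h | h
    · exact absurd (sub_eq_zero.1 h) h2
    · exact h
  rw [Algebra.adjoin_singleton_eq_range_aeval] at hz
  obtain ⟨p, hp⟩ := hz
  have hp' : (Polynomial.aeval ω) p = z := hp
  set g : ℤ[X] := X ^ 2 + X + 1 with hg
  have hgm : g.Monic := by
    have h2 : (X + 1 : ℤ[X]).degree < 2 := by
      refine lt_of_le_of_lt (degree_add_le _ _) ?_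
      simp
    simpa [hg, add_assoc] using monic_X_pow_add (n := 2) (p := (X + 1 : ℤ[X])) (by exact_mod_cast h2)
  have hgdeg : g.degree = 2 := by
    rw [hg]
    compute_degree!
  set r : ℤ[X] := p %ₘ g with hr
  have hde : r.degree < 2 := hgdeg ▸ degree_modByMonic_lt p hgm
  set a : ℤ := r.coeff 0 with ha
  set b : ℤ := r.coeff 1 with hb
  have hzv : z = (b : ℂ) * ω + (a : ℂ) := by
    have hsplit : r + g * (p /ₘ g) = p := modByMonic_add_div p g
    have haev := congrArg (Polynomial.aeval ω) hsplit
    rw [map_add, map_mul] at haev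
    have hg0 : (Polynomial.aeval ω) g = 0 := by
      simp only [hg, map_add, map_pow, map_one, aeval_X]
      linear_combination hω3
    rw [hg0, zero_mul, add_zero] at haev
    have hrform : r = C b * X + C a :=
      eq_X_add_C_of_degree_le_one (by exact_mod_cast Order.lt_succ_iff.mp (by exact_mod_cast hde))
    rw [← hp', ← haev]
    conv_lhs => rw [hrform]
    simp [mul_comm]
  have key : ((c - a - b : ℤ) : ℂ) = ((2 * b - a : ℤ) : ℂ) * ω := by
    push_cast
    linear_combination h + (1 - ω) * hzv - (b : ℂ) * hω3
  set u : ℤ := c - a - b with hu'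
  set v : ℤ := 2 * b - a with hv'
  have hC : (u ^ 2 + u * v + v ^ 2 : ℤ) = 0 := by
    have : ((u ^ 2 + u * v + v ^ 2 : ℤ) : ℂ) = 0 := by
      push_cast
      linear_combination ((u : ℂ) + (v : ℂ) * ω + (v : ℂ)) * key + (v : ℂ) ^ 2 * hω3
    exact_mod_cast this
  have hv : v = 0 := by nlinarith [sq_nonneg (2 * u + v), sq_nonneg v]
  have hu : u = 0 := by nlinarith [sq_nonneg u]
  exact ⟨b, by omega⟩

local notation "K3" => AlgebraicClosure (ZMod 3)

lemma base_case (n : ℕ) (hn : n ≠ 0) (h3 : ¬ (3 ∣ n))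
    (hdvd : cyclotomic n (ZMod 3) ∣ ((X + 1) * (X - 1) ^ 4 : (ZMod 3)[X])) :
    n ∣ 2 := by
  haveI : Fact (Nat.Prime 3) := ⟨by norm_num⟩
  set K := K3
  haveI : CharP K 3 := charP_of_injective_algebraMap (algebraMap (ZMod 3) K).injective 3
  have hdvdK : cyclotomic n K ∣ ((X + 1) * (X - 1) ^ 4 : K[X]) := by
    have := Polynomial.map_dvd (algebraMap (ZMod 3) K) hdvd
    rwa [map_cyclotomic, Polynomial.map_mul, Polynomial.map_pow, Polynomial.map_add,
      Polynomial.map_sub, Polynomial.map_X, Polynomial.map_one] at this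
  have hdegn : (cyclotomic n K).degree ≠ 0 := by
    rw [degree_cyclotomic]
    exact_mod_cast Nat.cast_ne_zero.mpr (Nat.totient_pos.2 (Nat.pos_of_ne_zero hn)).ne'
  obtain ⟨β, hβ⟩ := IsAlgClosed.exists_root _ hdegn
  haveI : NeZero (n : K) := ⟨by
    rw [Ne, CharP.cast_eq_zero_iff K 3]; exact h3⟩
  have hprim : IsPrimitiveRoot β n := (isRoot_cyclotomic_iff).1 hβ
  have hroot : (β + 1) * (β - 1) ^ 4 = 0 := by
    obtain ⟨g, hg⟩ := hdvdK
    have h2 := congrArg (eval β) hg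
    rw [eval_mul (p := cyclotomic n K), show eval β (cyclotomic n K) = 0 from hβ,
      zero_mul] at h2
    simpa using h2
  have hβ2 : β ^ 2 = 1 := by
    rcases mul_eq_zero.1 hroot with h | h
    · have hb : β = -1 := by linear_combination h
      rw [hb]; ring
    · have hb : β = 1 := by
        have h4 := pow_eq_zero_iff (n := 4) (by norm_num) |>.1 h
        linear_combination h4
      rw [hb]; ring
  exact hprim.dvd_of_pow_eq_one 2 hβ2

lemma fmod_facts : ((X + 1) * (X - 1) ^ 4 : (ZMod 3)[X]).Monic := by
  have h1 : ((X + 1 : (ZMod 3)[X])) = X + C 1 := by simp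
  have h2 : ((X - 1 : (ZMod 3)[X])) = X - C 1 := by simp
  rw [h1, h2]
  exact (monic_X_add_C 1).mul ((monic_X_sub_C 1).pow 4)

lemma fmod_deg : ((X + 1) * (X - 1) ^ 4 : (ZMod 3)[X]).natDegree = 5 := by
  have h1 : ((X + 1 : (ZMod 3)[X])) = X + C 1 := by simp
  have h2 : ((X - 1 : (ZMod 3)[X])) = X - C 1 := by simp
  rw [h1, h2, Monic.natDegree_mul (monic_X_add_C 1) ((monic_X_sub_C 1).pow 4),
    natDegree_pow, natDegree_X_sub_C, natDegree_X_add_C]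

lemma dvd_18 (n : ℕ) (hn : n ≠ 0)
    (hdvd : cyclotomic n (ZMod 3) ∣ ((X + 1) * (X - 1) ^ 4 : (ZMod 3)[X])) :
    n ∣ 18 := by
  haveI : Fact (Nat.Prime 3) := ⟨by norm_num⟩
  by_cases h3 : 3 ∣ n
  · obtain ⟨m, rfl⟩ := h3
    rw [mul_comm] at *
    have hm0 : m ≠ 0 := by intro h; simp [h] at hn
    by_cases h3m : 3 ∣ m
    · exfalso
      rw [cyclotomic_mul_prime_dvd_eq_pow (ZMod 3) h3m] at hdvd
      have hle := natDegree_le_of_dvd hdvd fmod_facts.ne_zero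
      rw [natDegree_pow, natDegree_cyclotomic, fmod_deg] at hle
      have ht1 : m.totient ≠ 1 := by
        intro h1
        rcases Nat.totient_eq_one_iff.1 h1 with rfl | rfl <;> omega
      have ht0 : 0 < m.totient := Nat.totient_pos.2 (Nat.pos_of_ne_zero hm0)
      omega
    · rw [cyclotomic_mul_prime_eq_pow_of_not_dvd (ZMod 3) h3m] at hdvd
      have hdvd' : cyclotomic m (ZMod 3) ∣ ((X + 1) * (X - 1) ^ 4 : (ZMod 3)[X]) :=
        dvd_trans (dvd_pow_self _ (by norm_num)) hdvd
      have := base_case m hm0 h3m hdvd'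
      have : m * 3 ∣ 2 * 3 := mul_dvd_mul_right this 3
      exact dvd_trans this (by norm_num)
  · exact dvd_trans (base_case n hn h3 hdvd) (by norm_num)
theorem stmt14 (ω : ℂ) (hω : IsPrimitiveRoot ω 3)
    (M : Matrix.GeneralLinearGroup (Fin 5) ℂ) (hfin : IsOfFinOrder M)
    (l : Multiset ℕ) (hl : ∀ n ∈ l, n ≠ 0)
    (hcyc : (M : Matrix (Fin 5) (Fin 5) ℂ).charpoly =
      (l.map fun n => cyclotomic n ℂ).prod)
    (q : Polynomial ℂ) (hq : ∀ i, q.coeff i ∈ Algebra.adjoin ℤ ({ω} : Set ℂ))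
    (hcong : (M : Matrix (Fin 5) (Fin 5) ℂ).charpoly - (X + 1) * (X - 1) ^ 4 =
      C (1 - ω) * q) :
    orderOf M ∣ 18 := by
  classical
  set A : Matrix (Fin 5) (Fin 5) ℂ := (M : Matrix (Fin 5) (Fin 5) ℂ) with hA
  -- Step 1: every n in l divides 18
  set Pz : ℤ[X] := (l.map fun n => cyclotomic n ℤ).prod with hPz
  set tz : ℤ[X] := (X + 1) * (X - 1) ^ 4 with htz
  have hmapprod : ∀ (R : Type) [inst : CommRing R],
      Pz.map (Int.castRingHom R) = (l.map fun n => cyclotomic n R).prod := by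
    intro R _
    rw [hPz]
    have hmp := map_multiset_prod (mapRingHom (Int.castRingHom R))
      (Multiset.map (fun n => cyclotomic n ℤ) l)
    rw [coe_mapRingHom] at hmp
    rw [hmp, Multiset.map_map]
    refine congrArg Multiset.prod ?_
    apply Multiset.map_congr rfl
    intro n _
    simp [map_cyclotomic]
  have hmapC : A.charpoly = Pz.map (Int.castRingHom ℂ) := by
    rw [hcyc, hmapprod ℂ]
  have hmapt : ∀ (R : Type) [inst : CommRing R],
      tz.map (Int.castRingHom R) = (X + 1) * (X - 1) ^ 4 := by
    intro R _
    simp [htz, Polynomial.map_mul, Polynomial.map_pow, Polynomial.map_add,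
      Polynomial.map_sub, Polynomial.map_one, Polynomial.map_X]
  have hdiv3 : ∀ i, (3 : ℤ) ∣ (Pz - tz).coeff i := by
    intro i
    apply key_div ω hω _ (q.coeff i) (hq i)
    have hco := congrArg (fun p => Polynomial.coeff p i) hcong
    simp only [coeff_sub, coeff_C_mul] at hco
    rw [hmapC, ← hmapt ℂ] at hco
    rw [coeff_sub, Int.cast_sub, ← hco, coeff_map, coeff_map]
    simp
  have hprod3 : (l.map fun n => cyclotomic n (ZMod 3)).prod =
      ((X + 1) * (X - 1) ^ 4 : (ZMod 3)[X]) := by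
    rw [← hmapprod (ZMod 3), ← hmapt (ZMod 3)]
    have h0 : (Pz - tz).map (Int.castRingHom (ZMod 3)) = 0 := by
      ext i
      rw [coeff_map]
      simp only [coeff_zero, eq_intCast]
      exact (ZMod.intCast_zmod_eq_zero_iff_dvd _ 3).2 (hdiv3 i)
    rw [Polynomial.map_sub, sub_eq_zero] at h0
    exact h0
  have hl18 : ∀ n ∈ l, n ∣ 18 := by
    intro n hn
    apply dvd_18 n (hl n hn)
    rw [← hprod3]
    exact Multiset.dvd_prod (Multiset.mem_map_of_mem _ hn)
  -- Step 2: minimal polynomial argument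
  have hk : 0 < orderOf M := hfin.orderOf_pos
  have hAk : A ^ orderOf M = 1 := by
    have := pow_orderOf_eq_one M
    have h2 := congrArg (Units.val) this
    rwa [Units.val_pow_eq_pow_val] at h2
  set μ : ℂ[X] := minpoly ℂ A with hμ
  have hint : IsIntegral ℂ A := Matrix.isIntegral A
  have hμ0 : μ ≠ 0 := minpoly.ne_zero hint
  have hμdvd : μ ∣ (X ^ orderOf M - 1 : ℂ[X]) := by
    apply minpoly.dvd
    simp [map_sub, map_pow, aeval_X, hAk]
  have hsepk : (X ^ orderOf M - 1 : ℂ[X]).Separable := by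
    have := separable_X_pow_sub_C (F := ℂ) (n := orderOf M) 1
      (by exact_mod_cast hk.ne') one_ne_zero
    simpa using this
  have hμsep : μ.Separable := hsepk.of_dvd hμdvd
  have h18ne : (X ^ 18 - 1 : ℂ[X]) ≠ 0 := by
    intro h
    have := congrArg (fun p => Polynomial.coeff p 18) h
    simp [coeff_one] at this
  have hroots : μ.roots ≤ (X ^ 18 - 1 : ℂ[X]).roots := by
    rw [Multiset.le_iff_count]
    intro z
    by_cases hz : z ∈ μ.roots
    · have hcount1 : μ.roots.count z ≤ 1 :=
        Multiset.nodup_iff_count_le_one.1 (nodup_roots hμsep) z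
      have hz18 : z ^ 18 = 1 := by
        have hzr : eval z A.charpoly = 0 := by
          obtain ⟨g, hg⟩ := Matrix.minpoly_dvd_charpoly A
          rw [hg, eval_mul, ((mem_roots hμ0).1 hz).eq_zero, zero_mul]
        rw [hcyc, eval_multiset_prod] at hzr
        rw [Multiset.map_map] at hzr
        obtain ⟨n, hnl, hn0⟩ := by
          have := Multiset.prod_eq_zero_iff.1 hzr
          rw [Multiset.mem_map] at this
          exact this
        have hzn : z ^ n = 1 := by
          obtain ⟨g, hg⟩ := cyclotomic.dvd_X_pow_sub_one n ℂ
          have := congrArg (eval z) hg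
          simp only [eval_mul, eval_sub, eval_pow, eval_X, eval_one] at this
          rw [Function.comp_apply] at hn0
          rw [hn0, zero_mul] at this
          linear_combination this
        obtain ⟨d, hd⟩ := hl18 n hnl
        rw [hd, pow_mul, hzn, one_pow]
      have hmem : z ∈ (X ^ 18 - 1 : ℂ[X]).roots := by
        rw [mem_roots h18ne]
        simp [IsRoot, hz18]
      calc μ.roots.count z ≤ 1 := hcount1
        _ ≤ (X ^ 18 - 1 : ℂ[X]).roots.count z := Multiset.one_le_count_iff_mem.2 hmem
    · simp [Multiset.count_eq_zero_of_notMem hz]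
  have hμsplits : μ.Splits := IsAlgClosed.splits μ
  have hμdvd18 : μ ∣ (X ^ 18 - 1 : ℂ[X]) := hμsplits.dvd_of_roots_le_roots hμ0 hroots
  have hA18 : A ^ 18 = 1 := by
    obtain ⟨g, hg⟩ := hμdvd18
    have := congrArg (Polynomial.aeval A) hg
    rw [map_mul, minpoly.aeval, zero_mul, map_sub, map_pow, aeval_X, map_one] at this
    rw [sub_eq_zero] at this
    exact this
  rw [orderOf_dvd_iff_pow_eq_one]
  apply Units.ext
  rw [Units.val_pow_eq_pow_val]
  exact hA18
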